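/- Let d : [0,1] → Σ_r^q be piecewise constant on a dyadic grid of size 2^{−N} (i.e., d constant on each [k 2^{−N}, (k+1)2^{−N})), and let P_N(d) be its pulse-width modulation: [P_N(d)]_i(t) = 1 if t ∈ [2^{−N}(k + Σ_{j<i} d_j(k 2^{−N})), 2^{−N}(k + Σ_{j≤i} d_j(k 2^{−N}))) for some k, and 0 otherwise. Then for every f : [0,1] → ℝ^q of bounded variation, |⟨d − P_N(d), f⟩| ≤ 2^{−N} ‖f‖_BV, where ⟨g,f⟩ = ∫₀¹ Σ_i g_i(t) f_i(t) dt and ‖f‖_BV = ∫₀¹ ‖ḟ(t)‖₁ dt is the total variation. -/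

import Mathlib

set_option maxHeartbeats 1000000

open MeasureTheory Set

/-- Weak approximation by pulse-width modulation: if `d` is a simplex-valued input,
piecewise constant on the dyadic grid of size `2^{-N}`, and `P` is its pulse-width
modulation, then for every `f : [0,1] → ℝ^q` of bounded variation (with weak derivative
`f'`), `|⟨d - P_N(d), f⟩| ≤ 2^{-N} ‖f‖_BV = 2^{-N} ∫₀¹ ‖f'(t)‖₁ dt`. -/
theorem pwm_weak_approx (q N : ℕ) (hq : 0 < q) (d : ℝ → Fin q → ℝ)
    (hsimplex : ∀ t ∈ Set.Icc (0:ℝ) 1, (∀ i, d t i ∈ Set.Icc (0:ℝ) 1) ∧ ∑ i, d t i = 1)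
    (hpc : ∀ k < 2 ^ N, ∀ t ∈ Set.Ico ((k:ℝ) * (2:ℝ) ^ (-(N:ℤ))) (((k:ℝ) + 1) * (2:ℝ) ^ (-(N:ℤ))),
      d t = d ((k:ℝ) * (2:ℝ) ^ (-(N:ℤ))))
    (P : ℝ → Fin q → ℝ)
    (hP01 : ∀ (t : ℝ) (i : Fin q), P t i = 0 ∨ P t i = 1)
    (hP : ∀ (t : ℝ) (i : Fin q), P t i = 1 ↔ ∃ k : ℕ, k < 2 ^ N ∧
      t ∈ Set.Ico
        ((2:ℝ) ^ (-(N:ℤ)) * ((k:ℝ) +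
          ∑ j ∈ Finset.univ.filter (fun j : Fin q => j < i), d ((k:ℝ) * (2:ℝ) ^ (-(N:ℤ))) j))
        ((2:ℝ) ^ (-(N:ℤ)) * ((k:ℝ) +
          ∑ j ∈ Finset.univ.filter (fun j : Fin q => j ≤ i), d ((k:ℝ) * (2:ℝ) ^ (-(N:ℤ))) j))) :
    ∀ (f f' : ℝ → Fin q → ℝ),
      (∀ i, IntervalIntegrable (fun t => f' t i) volume 0 1) →
      (∀ i, ∀ t ∈ Set.Icc (0:ℝ) 1, f t i = f 0 i + ∫ s in (0:ℝ)..t, f' s i) →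
      |∫ t in (0:ℝ)..1, ∑ i, (d t i - P t i) * f t i| ≤
        (2:ℝ) ^ (-(N:ℤ)) * ∫ t in (0:ℝ)..1, ∑ i, |f' t i| := by
  intro f f' hint hftc
  set h : ℝ := (2:ℝ) ^ (-(N:ℤ)) with hhdef
  have hpos : (0:ℝ) < h := by positivity
  have hNh : (2:ℝ) ^ N * h = 1 := by
    rw [hhdef, ← zpow_natCast (2:ℝ) N, ← zpow_add₀ (two_ne_zero)]
    simp
  have tk_mem : ∀ k : ℕ, k ≤ 2 ^ N → (k:ℝ) * h ∈ Icc (0:ℝ) 1 := by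
    intro k hk
    have hk' : (k:ℝ) ≤ (2:ℝ) ^ N := by
      have := (Nat.cast_le (α := ℝ)).mpr hk
      push_cast at this
      exact this
    constructor
    · positivity
    · nlinarith
  -- the continuous representative of f
  set F : Fin q → ℝ → ℝ := fun i t => f 0 i + ∫ s in (0:ℝ)..t, f' s i with hFdef
  have hFcont : ∀ i, ContinuousOn (F i) (Icc (0:ℝ) 1) := by
    intro i
    have h01 : (0:ℝ) ∈ Set.uIcc (0:ℝ) 1 := by
      rw [uIcc_of_le zero_le_one]; exact ⟨le_refl _, zero_le_one⟩
    have := intervalIntegral.continuousOn_primitive_interval' (hint i) h01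
    rw [uIcc_of_le zero_le_one] at this
    exact continuousOn_const.add this
  have hFeq : ∀ i, ∀ t ∈ Icc (0:ℝ) 1, f t i = F i t := fun i t ht => hftc i t ht
  -- sum over filter decomposition
  have hfilter : ∀ (g : Fin q → ℝ) (i : Fin q),
      ∑ j ∈ Finset.univ.filter (fun j : Fin q => j ≤ i), g j
        = g i + ∑ j ∈ Finset.univ.filter (fun j : Fin q => j < i), g j := by
    intro g i
    have : Finset.univ.filter (fun j : Fin q => j ≤ i)
        = insert i (Finset.univ.filter (fun j : Fin q => j < i)) := by
      ext j
      simp only [Finset.mem_filter, Finset.mem_insert, Finset.mem_univ, true_and]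
      rw [Fin.le_def, Fin.lt_def, Fin.ext_iff]
      omega
    rw [this, Finset.sum_insert (by simp)]
  -- bounds on the partial sums at grid points
  have hgrid : ∀ k : ℕ, k < 2 ^ N → ∀ i : Fin q,
      ((k:ℝ) * h ≤ h * ((k:ℝ) + ∑ j ∈ Finset.univ.filter (fun j : Fin q => j < i), d ((k:ℝ)*h) j))
      ∧ (h * ((k:ℝ) + ∑ j ∈ Finset.univ.filter (fun j : Fin q => j ≤ i), d ((k:ℝ)*h) j)
          ≤ ((k:ℝ)+1) * h) := by
    intro k hk i
    have hd := hsimplex ((k:ℝ)*h) (tk_mem k hk.le)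
    have hnn : (0:ℝ) ≤ ∑ j ∈ Finset.univ.filter (fun j : Fin q => j < i), d ((k:ℝ)*h) j :=
      Finset.sum_nonneg fun j _ => (hd.1 j).1
    have hle1 : ∑ j ∈ Finset.univ.filter (fun j : Fin q => j ≤ i), d ((k:ℝ)*h) j ≤ 1 := by
      calc ∑ j ∈ Finset.univ.filter (fun j : Fin q => j ≤ i), d ((k:ℝ)*h) j
          ≤ ∑ j, d ((k:ℝ)*h) j :=
            Finset.sum_le_sum_of_subset_of_nonneg (Finset.filter_subset _ _)
              (fun j _ _ => (hd.1 j).1)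
        _ = 1 := hd.2
    constructor
    · nlinarith
    · nlinarith
  -- P is locally an indicator
  have Ploc : ∀ k : ℕ, k < 2 ^ N → ∀ i : Fin q, ∀ t ∈ Ico ((k:ℝ)*h) (((k:ℝ)+1)*h),
      P t i = (Ico (h * ((k:ℝ) + ∑ j ∈ Finset.univ.filter (fun j : Fin q => j < i), d ((k:ℝ)*h) j))
        (h * ((k:ℝ) + ∑ j ∈ Finset.univ.filter (fun j : Fin q => j ≤ i), d ((k:ℝ)*h) j))).indicator
          (fun _ => (1:ℝ)) t := by
    intro k hk i t ht
    by_cases hmem : t ∈ Ico (h * ((k:ℝ) + ∑ j ∈ Finset.univ.filter (fun j : Fin q => j < i), d ((k:ℝ)*h) j))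
        (h * ((k:ℝ) + ∑ j ∈ Finset.univ.filter (fun j : Fin q => j ≤ i), d ((k:ℝ)*h) j))
    · rw [indicator_of_mem hmem]
      exact (hP t i).mpr ⟨k, hk, hmem⟩
    · rw [indicator_of_notMem hmem]
      rcases hP01 t i with h0 | h1
      · exact h0
      · exfalso
        obtain ⟨k', hk', hmem'⟩ := (hP t i).mp h1
        have hA := (hgrid k' hk' i).1
        have hB := (hgrid k' hk' i).2
        have ht1 : ((k':ℝ)) * h ≤ t := le_trans hA hmem'.1
        have ht2 : t < ((k':ℝ)+1) * h := lt_of_lt_of_le hmem'.2 hB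
        have hkk' : k' = k := by
          have h1' : (k':ℝ) < (k:ℝ) + 1 := by
            have := lt_of_le_of_lt ht1 ht.2
            exact lt_of_mul_lt_mul_right this hpos.le
          have h2' : (k:ℝ) < (k':ℝ) + 1 := by
            have := lt_of_le_of_lt ht.1 ht2
            exact lt_of_mul_lt_mul_right this hpos.le
          have h1'' : k' < k + 1 := by exact_mod_cast h1'
          have h2'' : k < k' + 1 := by exact_mod_cast h2'
          omega
        subst hkk'
        exact hmem hmem'
  -- P is globally an indicator, hence measurable
  have Pglob : ∀ i : Fin q, ∀ t : ℝ,
      P t i = (⋃ k ∈ Finset.range (2 ^ N),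
        Ico (h * ((k:ℝ) + ∑ j ∈ Finset.univ.filter (fun j : Fin q => j < i), d ((k:ℝ)*h) j))
          (h * ((k:ℝ) + ∑ j ∈ Finset.univ.filter (fun j : Fin q => j ≤ i), d ((k:ℝ)*h) j))).indicator
            (fun _ => (1:ℝ)) t := by
    intro i t
    by_cases hm : t ∈ ⋃ k ∈ Finset.range (2 ^ N),
        Ico (h * ((k:ℝ) + ∑ j ∈ Finset.univ.filter (fun j : Fin q => j < i), d ((k:ℝ)*h) j))
          (h * ((k:ℝ) + ∑ j ∈ Finset.univ.filter (fun j : Fin q => j ≤ i), d ((k:ℝ)*h) j))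
    · rw [indicator_of_mem hm]
      obtain ⟨k, hk, hmem⟩ := mem_iUnion₂.mp hm
      exact (hP t i).mpr ⟨k, Finset.mem_range.mp hk, hmem⟩
    · rw [indicator_of_notMem hm]
      rcases hP01 t i with h0 | h1
      · exact h0
      · exfalso
        obtain ⟨k, hk, hmem⟩ := (hP t i).mp h1
        exact hm (mem_iUnion₂.mpr ⟨k, Finset.mem_range.mpr hk, hmem⟩)
  have Pmeas : ∀ i : Fin q, Measurable fun t => P t i := by
    intro i
    have : (fun t => P t i) = (⋃ k ∈ Finset.range (2 ^ N),
        Ico (h * ((k:ℝ) + ∑ j ∈ Finset.univ.filter (fun j : Fin q => j < i), d ((k:ℝ)*h) j))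
          (h * ((k:ℝ) + ∑ j ∈ Finset.univ.filter (fun j : Fin q => j ≤ i), d ((k:ℝ)*h) j))).indicator
            (fun _ => (1:ℝ)) := funext (Pglob i)
    rw [this]
    exact measurable_const.indicator
      (MeasurableSet.biUnion (Finset.range _).countable_toSet fun k _ => measurableSet_Ico)
  have hP01' : ∀ t i, P t i ∈ Icc (0:ℝ) 1 := by
    intro t i
    rcases hP01 t i with h0 | h1
    · rw [h0]; exact ⟨le_refl _, zero_le_one⟩
    · rw [h1]; exact ⟨zero_le_one, le_refl _⟩
  -- THE KEY PER-INTERVAL ESTIMATE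
  have key : ∀ k : ℕ, k < 2 ^ N →
      IntervalIntegrable (fun t => ∑ i, (d t i - P t i) * f t i) volume ((k:ℝ)*h) (((k:ℝ)+1)*h)
      ∧ |∫ t in ((k:ℝ)*h)..(((k:ℝ)+1)*h), ∑ i, (d t i - P t i) * f t i|
          ≤ h * ∫ t in ((k:ℝ)*h)..(((k:ℝ)+1)*h), ∑ i, |f' t i| := by
    intro k hk
    set t0 : ℝ := (k:ℝ) * h with ht0def
    set t1 : ℝ := ((k:ℝ)+1) * h with ht1def
    have hle : t0 ≤ t1 := by rw [ht0def, ht1def]; nlinarith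
    have ht0m : t0 ∈ Icc (0:ℝ) 1 := tk_mem k hk.le
    have ht1m : t1 ∈ Icc (0:ℝ) 1 := by
      have := tk_mem (k+1) hk
      push_cast at this
      exact this
    have hIccsub : Icc t0 t1 ⊆ Icc (0:ℝ) 1 := Icc_subset_Icc ht0m.1 ht1m.2
    have hae1 : ({t1}ᶜ : Set ℝ) ∈ ae (volume : Measure ℝ) :=
      compl_mem_ae_iff.mpr (measure_singleton t1)
    -- the a.e. rewriting of the integrand
    have hcongr : ∀ᵐ t ∂(volume : Measure ℝ), t ∈ Set.uIoc t0 t1 →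
        (∑ i, (d t i - P t i) * f t i) = ∑ i, (d t0 i - P t i) * F i t := by
      filter_upwards [hae1] with t ht htI
      rw [uIoc_of_le hle] at htI
      have ht' : t ∈ Ico t0 t1 := ⟨htI.1.le, lt_of_le_of_ne htI.2 ht⟩
      have h01 : t ∈ Icc (0:ℝ) 1 := hIccsub ⟨htI.1.le, htI.2⟩
      have hkR : (k:ℝ) < 2^N := by exact_mod_cast hk
      rw [hpc (k:ℝ) hkR t ht']
      exact Finset.sum_congr rfl fun i _ => by rw [hFeq i t h01]
    -- per-coordinate data
    have hd := hsimplex t0 ht0m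
    have habs1 : ∀ t (i : Fin q), |d t0 i - P t i| ≤ 1 := by
      intro t i
      have h1 := hd.1 i
      have h2 := hP01' t i
      rw [abs_le]
      constructor <;> [linarith [h1.1, h2.2]; linarith [h1.2, h2.1]]
    -- bound on F increments
    have hbnd : ∀ (i : Fin q), ∀ t ∈ Icc t0 t1,
        |F i t - F i t0| ≤ ∫ s in t0..t1, |f' s i| := by
      intro i t ht
      have hsub1 : Set.uIcc (0:ℝ) t0 ⊆ Set.uIcc (0:ℝ) 1 := by
        rw [uIcc_of_le zero_le_one, uIcc_of_le ht0m.1]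
        exact Icc_subset_Icc le_rfl ht0m.2
      have hsub2 : Set.uIcc t0 t ⊆ Set.uIcc (0:ℝ) 1 := by
        rw [uIcc_of_le zero_le_one, uIcc_of_le ht.1]
        exact Icc_subset_Icc ht0m.1 ((hIccsub ht).2)
      have hsub3 : Set.uIcc t0 t1 ⊆ Set.uIcc (0:ℝ) 1 := by
        rw [uIcc_of_le zero_le_one, uIcc_of_le hle]
        exact Icc_subset_Icc ht0m.1 ht1m.2
      have heq : F i t - F i t0 = ∫ s in t0..t, f' s i := by
        rw [hFdef]
        simp only
        rw [← intervalIntegral.integral_add_adjacent_intervals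
          ((hint i).mono_set hsub1) ((hint i).mono_set hsub2)]
        ring
      rw [heq]
      calc |∫ s in t0..t, f' s i| ≤ ∫ s in t0..t, |f' s i| :=
            intervalIntegral.abs_integral_le_integral_abs ht.1
        _ ≤ ∫ s in t0..t1, |f' s i| := by
            apply intervalIntegral.integral_mono_interval le_rfl ht.1 ht.2
            · exact Filter.Eventually.of_forall fun s => abs_nonneg _
            · exact ((hint i).mono_set hsub3).abs
    have hMnn : ∀ i : Fin q, 0 ≤ ∫ s in t0..t1, |f' s i| :=
      fun i => intervalIntegral.integral_nonneg hle fun s _ => abs_nonneg _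
    -- integrability of the pieces
    have hsub3 : Set.uIcc t0 t1 ⊆ Set.uIcc (0:ℝ) 1 := by
      rw [uIcc_of_le zero_le_one, uIcc_of_le hle]
      exact Icc_subset_Icc ht0m.1 ht1m.2
    have hPint : ∀ i : Fin q, IntervalIntegrable (fun t => P t i) volume t0 t1 := by
      intro i
      rw [intervalIntegrable_iff_integrableOn_Ioc_of_le hle]
      refine Integrable.mono' (integrable_const 1) ((Pmeas i).aestronglyMeasurable.restrict) ?_
      exact Filter.Eventually.of_forall fun t => by
        rw [Real.norm_eq_abs, abs_le]
        exact ⟨by linarith [(hP01' t i).1], (hP01' t i).2⟩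
    have hgint : ∀ i : Fin q,
        IntervalIntegrable (fun t => (d t0 i - P t i) * (F i t - F i t0)) volume t0 t1 := by
      intro i
      rw [intervalIntegrable_iff_integrableOn_Ioc_of_le hle]
      have hmeas : AEStronglyMeasurable (fun t => (d t0 i - P t i) * (F i t - F i t0))
          (volume.restrict (Ioc t0 t1)) := by
        apply AEStronglyMeasurable.mul
        · exact (measurable_const.sub (Pmeas i)).aestronglyMeasurable.restrict
        · have h1 : AEMeasurable (F i) (volume.restrict (Icc (0:ℝ) 1)) :=
            (hFcont i).aemeasurable measurableSet_Icc
          have h2 : AEMeasurable (F i) (volume.restrict (Ioc t0 t1)) :=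
            h1.mono_measure (Measure.restrict_mono (Ioc_subset_Icc_self.trans hIccsub) le_rfl)
          exact (h2.sub aemeasurable_const).aestronglyMeasurable
      refine Integrable.mono' (integrable_const (∫ s in t0..t1, |f' s i|)) hmeas ?_
      refine (ae_restrict_iff' measurableSet_Ioc).mpr (Filter.Eventually.of_forall fun t ht => ?_)
      rw [Real.norm_eq_abs, abs_mul]
      calc |d t0 i - P t i| * |F i t - F i t0|
          ≤ 1 * (∫ s in t0..t1, |f' s i|) := by
            apply mul_le_mul (habs1 t i) (hbnd i t (Ioc_subset_Icc_self ht)) (abs_nonneg _)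
            exact zero_le_one
        _ = ∫ s in t0..t1, |f' s i| := one_mul _
    have hgint2 : ∀ i : Fin q,
        IntervalIntegrable (fun t => (d t0 i - P t i) * F i t0) volume t0 t1 :=
      fun i => (intervalIntegrable_const.sub (hPint i)).mul_const _
    have hgint3 : ∀ i : Fin q,
        IntervalIntegrable (fun t => (d t0 i - P t i) * F i t) volume t0 t1 := by
      intro i
      have : (fun t => (d t0 i - P t i) * F i t)
          = fun t => (d t0 i - P t i) * F i t0 + (d t0 i - P t i) * (F i t - F i t0) := by
        funext t; ring
      rw [this]
      exact (hgint2 i).add (hgint i)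
    -- the mean-zero property
    have hPzero : ∀ i : Fin q, ∫ t in t0..t1, (d t0 i - P t i) = 0 := by
      intro i
      have hPval : ∫ t in t0..t1, P t i = h * d t0 i := by
        have hcongrP : ∫ t in t0..t1, P t i
            = ∫ t in t0..t1, (Ico (h * ((k:ℝ) + ∑ j ∈ Finset.univ.filter (fun j : Fin q => j < i), d t0 j))
              (h * ((k:ℝ) + ∑ j ∈ Finset.univ.filter (fun j : Fin q => j ≤ i), d t0 j))).indicator
                (fun _ => (1:ℝ)) t := by
          apply intervalIntegral.integral_congr_ae
          filter_upwards [hae1] with t ht htI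
          rw [uIoc_of_le hle] at htI
          exact Ploc k hk i t ⟨htI.1.le, lt_of_le_of_ne htI.2 ht⟩
        set A := h * ((k:ℝ) + ∑ j ∈ Finset.univ.filter (fun j : Fin q => j < i), d t0 j) with hAdef
        set B := h * ((k:ℝ) + ∑ j ∈ Finset.univ.filter (fun j : Fin q => j ≤ i), d t0 j) with hBdef
        have hA : t0 ≤ A := (hgrid k hk i).1
        have hB : B ≤ t1 := (hgrid k hk i).2
        have hABle : A ≤ B := by
          rw [hAdef, hBdef, hfilter (d t0) i]
          nlinarith [(hd.1 i).1]
        have hBA : B - A = h * d t0 i := by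
          rw [hAdef, hBdef, hfilter (d t0) i]
          ring
        rw [hcongrP, intervalIntegral.integral_of_le hle,
          MeasureTheory.integral_indicator measurableSet_Ico]
        rw [setIntegral_const]
        rw [Measure.real_def, Measure.restrict_apply measurableSet_Ico]
        have hvol : volume (Ico A B ∩ Ioc t0 t1) = ENNReal.ofReal (B - A) := by
          apply le_antisymm
          · calc volume (Ico A B ∩ Ioc t0 t1) ≤ volume (Icc A B) :=
                measure_mono (inter_subset_left.trans Ico_subset_Icc_self)
              _ = ENNReal.ofReal (B - A) := Real.volume_Icc
          · calc ENNReal.ofReal (B - A) = volume (Ioo A B) := Real.volume_Ioo.symm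
              _ ≤ volume (Ico A B ∩ Ioc t0 t1) := measure_mono fun x hx =>
                  ⟨⟨hx.1.le, hx.2⟩, ⟨lt_of_le_of_lt hA hx.1, hx.2.le.trans hB⟩⟩
        rw [hvol, ENNReal.toReal_ofReal (by linarith), smul_eq_mul, mul_one, hBA]
      rw [intervalIntegral.integral_sub intervalIntegrable_const (hPint i),
        intervalIntegral.integral_const, hPval]
      have : t1 - t0 = h := by rw [ht0def, ht1def]; ring
      rw [this, smul_eq_mul]
      ring
    -- the per-coordinate estimate
    have hesti : ∀ i : Fin q, |∫ t in t0..t1, (d t0 i - P t i) * F i t|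
        ≤ h * ∫ s in t0..t1, |f' s i| := by
      intro i
      have hsplit : ∫ t in t0..t1, (d t0 i - P t i) * F i t
          = ∫ t in t0..t1, (d t0 i - P t i) * (F i t - F i t0) := by
        have : (fun t => (d t0 i - P t i) * F i t)
            = fun t => (d t0 i - P t i) * F i t0 + (d t0 i - P t i) * (F i t - F i t0) := by
          funext t; ring
        rw [this, intervalIntegral.integral_add (hgint2 i) (hgint i)]
        have hz : ∫ t in t0..t1, (d t0 i - P t i) * F i t0
            = (∫ t in t0..t1, (d t0 i - P t i)) * F i t0 :=
          intervalIntegral.integral_mul_const _ _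
        rw [hz, hPzero i]
        ring
      rw [hsplit]
      calc |∫ t in t0..t1, (d t0 i - P t i) * (F i t - F i t0)|
          ≤ ∫ t in t0..t1, |(d t0 i - P t i) * (F i t - F i t0)| :=
            intervalIntegral.abs_integral_le_integral_abs hle
        _ ≤ ∫ t in t0..t1, (∫ s in t0..t1, |f' s i|) := by
            apply intervalIntegral.integral_mono_on hle (hgint i).abs intervalIntegrable_const
            intro t ht
            rw [abs_mul]
            calc |d t0 i - P t i| * |F i t - F i t0|
                ≤ 1 * (∫ s in t0..t1, |f' s i|) :=
                  mul_le_mul (habs1 t i) (hbnd i t ht) (abs_nonneg _) zero_le_one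
              _ = ∫ s in t0..t1, |f' s i| := one_mul _
        _ = h * ∫ s in t0..t1, |f' s i| := by
            rw [intervalIntegral.integral_const, smul_eq_mul]
            congr 1
            rw [ht0def, ht1def]; ring
    -- assemble over i
    have horigint : IntervalIntegrable (fun t => ∑ i, (d t i - P t i) * f t i) volume t0 t1 := by
      rw [intervalIntegrable_iff_integrableOn_Ioc_of_le hle]
      have hS : IntervalIntegrable (fun t => ∑ i, (d t0 i - P t i) * F i t) volume t0 t1 := by
        have := IntervalIntegrable.sum (f := fun i t => (d t0 i - P t i) * F i t)
          Finset.univ fun i _ => hgint3 i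
        rwa [Finset.sum_fn] at this
      rw [intervalIntegrable_iff_integrableOn_Ioc_of_le hle] at hS
      have : ∀ᵐ t ∂(volume.restrict (Ioc t0 t1)),
          (∑ i, (d t i - P t i) * f t i) = ∑ i, (d t0 i - P t i) * F i t := by
        refine (ae_restrict_iff' measurableSet_Ioc).mpr ?_
        filter_upwards [hcongr] with t ht htI
        exact ht (by rwa [uIoc_of_le hle])
      exact hS.congr (this.mono fun t ht => ht.symm)
    refine ⟨horigint, ?_⟩
    rw [intervalIntegral.integral_congr_ae hcongr]
    rw [intervalIntegral.integral_finset_sum (f := fun i t => (d t0 i - P t i) * F i t)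
      (fun i _ => hgint3 i)]
    calc |∑ i, ∫ t in t0..t1, (d t0 i - P t i) * F i t|
        ≤ ∑ i, |∫ t in t0..t1, (d t0 i - P t i) * F i t| :=
          Finset.abs_sum_le_sum_abs _ _
      _ ≤ ∑ i, h * ∫ s in t0..t1, |f' s i| := Finset.sum_le_sum fun i _ => hesti i
      _ = h * ∑ i, ∫ s in t0..t1, |f' s i| := by rw [Finset.mul_sum]
      _ = h * ∫ s in t0..t1, ∑ i, |f' s i| := by
          rw [intervalIntegral.integral_finset_sum (f := fun i t => |f' t i|)
            (fun i _ => ((hint i).mono_set hsub3).abs)]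
  -- FINAL ASSEMBLY
  have ha : ∀ k : ℕ, ((k+1 : ℕ):ℝ) * h = ((k:ℝ)+1) * h := by intro k; push_cast; ring
  have haN : ((2^N : ℕ):ℝ) * h = 1 := by
    push_cast
    exact hNh
  have hsum1 : ∑ k ∈ Finset.range (2^N),
      ∫ t in ((k:ℝ)*h)..(((k:ℝ)+1)*h), ∑ i, (d t i - P t i) * f t i
      = ∫ t in (0:ℝ)..1, ∑ i, (d t i - P t i) * f t i := by
    have := intervalIntegral.sum_integral_adjacent_intervals
      (a := fun k : ℕ => (k:ℝ) * h) (n := 2^N) (μ := volume)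
      (f := fun t => ∑ i, (d t i - P t i) * f t i)
      (fun k hk => by
        simp only [Nat.cast_add, Nat.cast_one]
        exact (key k hk).1)
    simp only [Nat.cast_add, Nat.cast_one, Nat.cast_zero, Nat.cast_pow, Nat.cast_ofNat,
      zero_mul] at this
    rw [hNh] at this
    exact this
  have hsub01 : ∀ k : ℕ, k < 2^N → Set.uIcc ((k:ℝ)*h) (((k:ℝ)+1)*h) ⊆ Set.uIcc (0:ℝ) 1 := by
    intro k hk
    have h0 := tk_mem k hk.le
    have h1 := tk_mem (k+1) hk
    push_cast at h1
    rw [uIcc_of_le zero_le_one, uIcc_of_le (by nlinarith : (k:ℝ)*h ≤ ((k:ℝ)+1)*h)]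
    exact Icc_subset_Icc h0.1 h1.2
  have habsint : IntervalIntegrable (fun t => ∑ i, |f' t i|) volume 0 1 :=
    by
      have := IntervalIntegrable.sum (f := fun i t => |f' t i|) Finset.univ
        fun i _ => (hint i).abs
      rwa [Finset.sum_fn] at this
  have hsum2 : ∑ k ∈ Finset.range (2^N),
      ∫ t in ((k:ℝ)*h)..(((k:ℝ)+1)*h), ∑ i, |f' t i|
      = ∫ t in (0:ℝ)..1, ∑ i, |f' t i| := by
    have := intervalIntegral.sum_integral_adjacent_intervals
      (a := fun k : ℕ => (k:ℝ) * h) (n := 2^N) (μ := volume)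
      (f := fun t => ∑ i, |f' t i|)
      (fun k hk => by
        simp only [Nat.cast_add, Nat.cast_one]
        exact habsint.mono_set (hsub01 k hk))
    simp only [Nat.cast_add, Nat.cast_one, Nat.cast_zero, Nat.cast_pow, Nat.cast_ofNat,
      zero_mul] at this
    rw [hNh] at this
    exact this
  rw [← hsum1, ← hsum2, Finset.mul_sum]
  calc |∑ k ∈ Finset.range (2^N), ∫ t in ((k:ℝ)*h)..(((k:ℝ)+1)*h), ∑ i, (d t i - P t i) * f t i|
      ≤ ∑ k ∈ Finset.range (2^N), |∫ t in ((k:ℝ)*h)..(((k:ℝ)+1)*h), ∑ i, (d t i - P t i) * f t i| :=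
        Finset.abs_sum_le_sum_abs _ _
    _ ≤ ∑ k ∈ Finset.range (2^N), h * ∫ t in ((k:ℝ)*h)..(((k:ℝ)+1)*h), ∑ i, |f' t i| :=
        Finset.sum_le_sum fun k hk => (key k (Finset.mem_range.mp hk)).2
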